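/- Under the joint law of (X, Y₁, …, Y_K) described in the context, the estimation error Z̃ = X − Ŷ of the select-max estimator is one-sided exponentially distributed with rate λ + K·δ: the pushforward of the joint law under (x, y₁, …, y_K) ↦ x − max{y₁, …, y_K} equals Exp(λ + Kδ), where λ + Kδ = K/D − (K−1)λ. -/

import Mathlib

open MeasureTheory Set
open scoped ENNReal

/-- The one-sided exponential distribution `Exp(r)`, with density `r·e^{−r x}` on `x ≥ 0`. -/
noncomputable def expMeasure (r : ℝ) : Measure ℝ :=
  volume.withDensity fun x => if 0 ≤ x then ENNReal.ofReal (r * Real.exp (-r * x)) else 0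

/-- The forward test channel `κ(x)` of the one-sided exponential source: an atom of mass
`e^{−δx}` at `0` plus the density `y ↦ δ·e^{−δ(x−y)}` on the interval `(0, x]`. -/

lemma expMeasure_eq (r : ℝ) :
    expMeasure r = volume.withDensity (ProbabilityTheory.exponentialPDF r) := by
  unfold expMeasure
  congr 1
  funext x
  rw [ProbabilityTheory.exponentialPDF_eq]
  split_ifs with h
  · rw [neg_mul]
  · simp

lemma expMeasure_Iic {r : ℝ} (hr : 0 < r) (z : ℝ) :
    expMeasure r (Iic z)
      = ENNReal.ofReal (if 0 ≤ z then 1 - Real.exp (-(r * z)) else 0) := by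
  rw [expMeasure_eq, withDensity_apply _ measurableSet_Iic,
    ProbabilityTheory.lintegral_exponentialPDF_eq_antiDeriv hr]

lemma expMeasure_prob {r : ℝ} (hr : 0 < r) : IsProbabilityMeasure (expMeasure r) :=
  ⟨by rw [expMeasure_eq, withDensity_apply _ MeasurableSet.univ, setLIntegral_univ,
      ProbabilityTheory.lintegral_exponentialPDF_eq_one hr]⟩

lemma expMeasure_ae_nonneg (r : ℝ) : ∀ᵐ x ∂(expMeasure r), 0 ≤ x := by
  rw [ae_iff]
  have h : {x : ℝ | ¬ 0 ≤ x} = Iio 0 := by ext x; simp [not_le]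
  rw [h, expMeasure_eq, withDensity_apply _ measurableSet_Iio,
    ProbabilityTheory.lintegral_exponentialPDF_of_nonpos le_rfl]

noncomputable def expChannel (δ : ℝ) (x : ℝ) : Measure ℝ :=
  (ENNReal.ofReal (Real.exp (-δ * x))) • Measure.dirac 0 +
    volume.withDensity
      ((Set.Ioc (0 : ℝ) x).indicator fun y => ENNReal.ofReal (δ * Real.exp (-δ * (x - y))))

/-- The joint law of `(X, Y₁, …, Y_K)`: the composition of `Exp(λ)` (the law of `X`) with the
`K`-fold product kernel `x ↦ κ(x)^{⊗K}`, so that `Y₁, …, Y_K` are conditionally i.i.d. given `X`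
with conditional law `κ(X)`. -/
lemma lint_exp (δ x a b : ℝ) (hδ : 0 < δ) (hab : a ≤ b) :
    ∫⁻ y in Ioc a b, ENNReal.ofReal (δ * Real.exp (-δ * (x - y)))
      = ENNReal.ofReal (Real.exp (-δ * (x - b)) - Real.exp (-δ * (x - a))) := by
  have hcont : Continuous fun y : ℝ => δ * Real.exp (-δ * (x - y)) := by
    continuity
  rw [← ofReal_integral_eq_lintegral_ofReal (hcont.integrableOn_Ioc)
      (ae_of_all _ fun y => by positivity)]
  congr 1
  rw [← intervalIntegral.integral_of_le hab]
  have hderiv : ∀ y : ℝ, HasDerivAt (fun y => Real.exp (-δ * (x - y)))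
      (δ * Real.exp (-δ * (x - y))) y := by
    intro y
    have h1 : HasDerivAt (fun y : ℝ => -δ * (x - y)) δ y := by
      simpa using ((hasDerivAt_id y).const_sub x).const_mul (-δ)
    simpa [mul_comm] using h1.exp
  rw [intervalIntegral.integral_eq_sub_of_hasDerivAt (fun y _ => hderiv y)
    (hcont.intervalIntegrable _ _)]

lemma expChannel_apply (δ x : ℝ) {s : Set ℝ} (hs : MeasurableSet s) :
    expChannel δ x s = ENNReal.ofReal (Real.exp (-δ * x)) * s.indicator 1 0 +
      ∫⁻ y in Ioc 0 x ∩ s, ENNReal.ofReal (δ * Real.exp (-δ * (x - y))) := by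
  rw [expChannel, Measure.add_apply, Measure.smul_apply, smul_eq_mul,
    Measure.dirac_apply' _ hs, withDensity_apply _ hs,
    lintegral_indicator measurableSet_Ioc, Measure.restrict_restrict measurableSet_Ioc]

lemma expChannel_univ {δ x : ℝ} (hδ : 0 < δ) (hx : 0 ≤ x) :
    expChannel δ x univ = 1 := by
  rw [expChannel_apply δ x MeasurableSet.univ, inter_univ, lint_exp δ x 0 x hδ hx]
  rw [indicator_univ, Pi.one_apply, mul_one, ← ENNReal.ofReal_add (by positivity)
    (by simp [Real.exp_le_exp]; nlinarith [Real.exp_nonneg (-δ * x)])]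
  norm_num

lemma expChannel_Iio {δ x : ℝ} (hδ : 0 < δ) (hx : 0 ≤ x) (c : ℝ) :
    expChannel δ x (Iio c)
      = if 0 < c then ENNReal.ofReal (Real.exp (-δ * (x - min c x))) else 0 := by
  rw [expChannel_apply δ x measurableSet_Iio]
  have hind : (Iio c).indicator (1 : ℝ → ℝ≥0∞) 0 = if 0 < c then 1 else 0 := by
    by_cases h : (0:ℝ) < c <;> simp [indicator, h]
  rw [hind]
  by_cases hc : 0 < c
  · rw [if_pos hc, if_pos hc, mul_one]
    rcases le_or_gt c x with hcx | hxc
    · have hset : Ioc 0 x ∩ Iio c = Ioo 0 c := by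
        ext y
        simp only [mem_inter_iff, mem_Ioc, mem_Iio, mem_Ioo]
        constructor
        · rintro ⟨⟨h1, _⟩, h3⟩; exact ⟨h1, h3⟩
        · rintro ⟨h1, h2⟩; exact ⟨⟨h1, le_trans h2.le hcx⟩, h2⟩
      rw [hset, Measure.restrict_congr_set Ioo_ae_eq_Ioc, lint_exp δ x 0 c hδ hc.le,
        min_eq_left hcx, ← ENNReal.ofReal_add (by positivity)
          (by simp [Real.exp_le_exp]; nlinarith)]
      norm_num
    · have hset : Ioc 0 x ∩ Iio c = Ioc 0 x := by
        apply inter_eq_left.mpr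
        intro y hy
        exact lt_of_le_of_lt hy.2 hxc
      rw [hset, lint_exp δ x 0 x hδ hx, min_eq_right hxc.le,
        ← ENNReal.ofReal_add (by positivity)
          (by simp [Real.exp_le_exp]; nlinarith)]
      norm_num
  · rw [if_neg hc, if_neg hc, mul_zero, zero_add]
    have hset : Ioc 0 x ∩ Iio c = ∅ := by
      ext y
      simp only [mem_inter_iff, mem_Ioc, mem_Iio, mem_empty_iff_false, iff_false, not_and]
      rintro ⟨h1, _⟩ h3
      exact hc (lt_trans h1 h3)
    simp [hset]

instance expChannel_finite (δ x : ℝ) : IsFiniteMeasure (expChannel δ x) := by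
  constructor
  rw [expChannel_apply δ x MeasurableSet.univ, inter_univ]
  have hb : ∫⁻ y in Ioc 0 x, ENNReal.ofReal (δ * Real.exp (-δ * (x - y)))
      ≤ ENNReal.ofReal |δ| * volume (Ioc 0 x) := by
    rw [← setLIntegral_const]
    apply setLIntegral_mono' measurableSet_Ioc
    intro y hy
    apply ENNReal.ofReal_le_ofReal
    rcases le_or_gt δ 0 with h | h
    · have : δ * Real.exp (-δ * (x - y)) ≤ 0 := by
        apply mul_nonpos_of_nonpos_of_nonneg h (Real.exp_nonneg _)
      exact le_trans this (abs_nonneg δ)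
    · have h1 : Real.exp (-δ * (x - y)) ≤ 1 := by
        rw [Real.exp_le_one_iff]
        nlinarith [hy.2]
      calc δ * Real.exp (-δ * (x - y)) ≤ δ * 1 := by nlinarith [Real.exp_nonneg (-δ * (x-y))]
        _ = δ := mul_one δ
        _ ≤ |δ| := le_abs_self δ
  have : volume (Ioc (0:ℝ) x) < ⊤ := measure_Ioc_lt_top
  calc ENNReal.ofReal (Real.exp (-δ * x)) * (univ : Set ℝ).indicator 1 0 +
        ∫⁻ y in Ioc 0 x, ENNReal.ofReal (δ * Real.exp (-δ * (x - y)))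
      ≤ ENNReal.ofReal (Real.exp (-δ * x)) * 1 + ENNReal.ofReal |δ| * volume (Ioc 0 x) := by
        gcongr; simp [indicator]
    _ < ⊤ := by
        apply ENNReal.add_lt_top.mpr
        constructor
        · simp [lt_top_iff_ne_top]
        · exact ENNReal.mul_lt_top ENNReal.ofReal_lt_top this

lemma measurable_expChannel (δ : ℝ) : Measurable (expChannel δ) := by
  rw [Measure.measurable_measure]
  intro s hs
  have key : ∀ x, expChannel δ x s = ENNReal.ofReal (Real.exp (-δ * x)) * s.indicator 1 0 +
      ∫⁻ y, ({p : ℝ × ℝ | p.2 ∈ s ∧ 0 < p.2 ∧ p.2 ≤ p.1}.indicator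
        (fun p => ENNReal.ofReal (δ * Real.exp (-δ * (p.1 - p.2)))) (x, y)) := by
    intro x
    rw [expChannel_apply δ x hs, ← lintegral_indicator (measurableSet_Ioc.inter hs)]
    congr 1
    apply lintegral_congr
    intro y
    by_cases h : y ∈ Ioc 0 x ∩ s
    · rw [indicator_of_mem h, indicator_of_mem]
      exact ⟨h.2, h.1.1, h.1.2⟩
    · rw [indicator_of_notMem h, indicator_of_notMem]
      intro hmem
      exact h ⟨⟨hmem.2.1, hmem.2.2⟩, hmem.1⟩
  simp_rw [key]
  apply Measurable.add
  · apply Measurable.mul _ measurable_const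
    exact ENNReal.measurable_ofReal.comp ((measurable_id.const_mul (-δ)).exp)
  · apply Measurable.lintegral_prod_right'
    apply Measurable.indicator
    · apply ENNReal.measurable_ofReal.comp
      apply Measurable.const_mul
      exact ((measurable_fst.sub measurable_snd).const_mul (-δ)).exp
    · apply MeasurableSet.inter
      · exact measurable_snd hs
      · apply MeasurableSet.inter
        · exact measurableSet_lt measurable_const measurable_snd
        · exact measurableSet_le measurable_snd measurable_fst

lemma measurable_pi_expChannel (δ : ℝ) (K : ℕ) :
    Measurable fun x : ℝ => Measure.pi fun _ : Fin K => expChannel δ x := by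
  rw [Measure.measurable_measure]
  intro s hs
  have huniv : Measurable fun x : ℝ =>
      (Measure.pi fun _ : Fin K => expChannel δ x) univ := by
    simp_rw [Measure.pi_univ]
    exact Finset.measurable_prod _ fun i _ =>
      (Measure.measurable_coe MeasurableSet.univ).comp (measurable_expChannel δ)
  refine MeasurableSpace.induction_on_inter
    (C := fun t _ => Measurable fun x : ℝ => (Measure.pi fun _ : Fin K => expChannel δ x) t)
    generateFrom_pi.symm isPiSystem_pi ?_ ?_ ?_ ?_ _ hs
  · simp only [measure_empty]; exact measurable_const
  · rintro t ⟨t', ht', rfl⟩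
    simp only [mem_pi, mem_univ, true_implies, mem_setOf_eq] at ht'
    simp_rw [Measure.pi_pi]
    exact Finset.measurable_prod _ fun i _ =>
      (Measure.measurable_coe (ht' i)).comp (measurable_expChannel δ)
  · intro t ht hmeas
    have : ∀ x : ℝ, (Measure.pi fun _ : Fin K => expChannel δ x) tᶜ =
        (Measure.pi fun _ : Fin K => expChannel δ x) univ -
          (Measure.pi fun _ : Fin K => expChannel δ x) t := fun x =>
      measure_compl ht (measure_ne_top _ _)
    simp_rw [this]
    exact huniv.sub hmeas
  · intro f hdisj hfm hC
    have : ∀ x : ℝ, (Measure.pi fun _ : Fin K => expChannel δ x) (⋃ i, f i) =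
        ∑' i, (Measure.pi fun _ : Fin K => expChannel δ x) (f i) := fun x =>
      measure_iUnion hdisj hfm
    simp_rw [this]
    exact Measurable.ennreal_tsum hC

lemma measurable_m (δ : ℝ) (K : ℕ) :
    Measurable fun x : ℝ =>
      (Measure.pi fun _ : Fin K => expChannel δ x).map fun ys => (x, ys) := by
  rw [Measure.measurable_measure]
  intro s hs
  have key : ∀ x : ℝ, (Measure.pi fun _ : Fin K => expChannel δ x).map
      (fun ys => (x, ys)) s
      = (Measure.pi fun _ : Fin K => expChannel δ x) (Prod.mk x ⁻¹' s) := fun x =>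
    Measure.map_apply measurable_prodMk_left hs
  simp_rw [key]
  let κ : ProbabilityTheory.Kernel ℝ (Fin K → ℝ) :=
    ⟨fun x => Measure.pi fun _ : Fin K => expChannel δ x, measurable_pi_expChannel δ K⟩
  exact ProbabilityTheory.Kernel.measurable_kernel_prodMk_left_of_finite (κ := κ) hs
    (fun a => (inferInstance : IsFiniteMeasure (Measure.pi fun _ : Fin K => expChannel δ a)))

lemma measurable_err (K : ℕ) :
    Measurable fun p : ℝ × (Fin K → ℝ) => p.1 - ⨆ i, p.2 i :=
  measurable_fst.sub (Measurable.iSup fun i => (measurable_pi_apply i).comp measurable_snd)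

lemma inner_eval {δ : ℝ} (hδ : 0 < δ) {K : ℕ} (hK : 1 ≤ K) (z : ℝ) {x : ℝ} (hx : 0 ≤ x) :
    (Measure.pi fun _ : Fin K => expChannel δ x).map (fun ys => (x, ys))
      ((fun p : ℝ × (Fin K → ℝ) => p.1 - ⨆ i, p.2 i) ⁻¹' Iic z)
      = if 0 ≤ z then
          1 - (if z < x then ENNReal.ofReal (Real.exp (-((K:ℝ) * δ * z))) else 0)
        else 0 := by
  haveI : Nonempty (Fin K) := Fin.pos_iff_nonempty.mp hK
  rw [Measure.map_apply measurable_prodMk_left ((measurable_err K) measurableSet_Iic)]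
  have hpre : (Prod.mk x) ⁻¹' ((fun p : ℝ × (Fin K → ℝ) => p.1 - ⨆ i, p.2 i) ⁻¹' Iic z)
      = (Set.pi univ fun _ : Fin K => Iio (x - z))ᶜ := by
    ext ys
    simp only [mem_preimage, mem_Iic, mem_compl_iff, Set.mem_pi, mem_univ, true_implies,
      mem_Iio, not_forall, not_lt]
    constructor
    · intro h
      obtain ⟨i, hi⟩ := Finite.exists_max ys
      have hsup : ⨆ j, ys j ≤ ys i := ciSup_le hi
      exact ⟨i, by linarith⟩
    · rintro ⟨i, hi⟩
      have : ys i ≤ ⨆ j, ys j := le_ciSup (Set.finite_range ys).bddAbove i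
      linarith
  rw [hpre, measure_compl (MeasurableSet.univ_pi fun _ => measurableSet_Iio)
    (measure_ne_top _ _), Measure.pi_univ, Measure.pi_pi]
  simp only [Finset.prod_const, expChannel_univ hδ hx, one_pow, Finset.card_univ,
    Fintype.card_fin]
  rw [expChannel_Iio hδ hx]
  rcases lt_or_ge z 0 with hz | hz
  · rw [if_neg (not_le.mpr hz), if_pos (by linarith), min_eq_right (by linarith)]
    simp
  · rw [if_pos hz]
    rcases lt_or_ge z x with hzx | hxz
    · rw [if_pos (by linarith), if_pos hzx, min_eq_left (by linarith)]
      congr 1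
      rw [← ENNReal.ofReal_pow (Real.exp_nonneg _), ← Real.exp_nat_mul]
      congr 1
      ring
    · rw [if_neg (not_lt.mpr (by linarith)), if_neg (not_lt.mpr hxz),
        zero_pow (by omega), tsub_zero]

noncomputable def jointLaw (lam δ : ℝ) (K : ℕ) : Measure (ℝ × (Fin K → ℝ)) :=
  (expMeasure lam).bind fun x =>
    (Measure.pi fun _ : Fin K => expChannel δ x).map fun ys => (x, ys)

/-- the estimation error `Z̃ = X − Ŷ` of the select-max estimator
`Ŷ = max{Y₁,…,Y_K}` is one-sided exponentially distributed with rate `λ + K·δ`: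
the pushforward of the joint law under `(x, ys) ↦ x − max_i ys i` equals `Exp(λ + Kδ)`,
where `λ + Kδ = K/D − (K−1)λ`. -/
theorem selectMax_error_exponential (lam D : ℝ) (hlam : 0 < lam) (hD : 0 < D)
    (hD' : D < 1 / lam) (K : ℕ) (hK : 1 ≤ K) :
    (jointLaw lam (1 / D - lam) K).map (fun p => p.1 - ⨆ i, p.2 i)
      = expMeasure (lam + K * (1 / D - lam)) := by
  have hK0 : 0 < K := hK
  haveI : Nonempty (Fin K) := Fin.pos_iff_nonempty.mp hK
  set δ := 1 / D - lam with hδdef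
  have hδ : 0 < δ := by
    have h1 : lam < 1 / D := by
      rw [lt_div_iff₀ hD]
      calc lam * D < lam * (1 / lam) := by exact mul_lt_mul_of_pos_left hD' hlam
        _ = 1 := by field_simp
    simp only [hδdef, sub_pos]
    exact h1
  set r := lam + (K : ℝ) * δ with hrdef
  have hKpos : (0 : ℝ) < K := by exact_mod_cast hK0
  have hr : 0 < r := add_pos hlam (mul_pos hKpos hδ)
  haveI hprob := expMeasure_prob hlam
  have hf := measurable_err K
  have hbind : ∀ s : Set ℝ, MeasurableSet s →
      (jointLaw lam δ K).map (fun p => p.1 - ⨆ i, p.2 i) s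
      = ∫⁻ x, (Measure.pi fun _ : Fin K => expChannel δ x).map (fun ys => (x, ys))
          ((fun p : ℝ × (Fin K → ℝ) => p.1 - ⨆ i, p.2 i) ⁻¹' s) ∂(expMeasure lam) := by
    intro s hsm
    rw [Measure.map_apply hf hsm, jointLaw, Measure.bind_apply (hf hsm) (measurable_m δ K).aemeasurable]
  haveI : IsFiniteMeasure ((jointLaw lam δ K).map fun p => p.1 - ⨆ i, p.2 i) := by
    constructor
    rw [hbind univ MeasurableSet.univ]
    have heq : ∫⁻ x, (Measure.pi fun _ : Fin K => expChannel δ x).map (fun ys => (x, ys))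
        ((fun p : ℝ × (Fin K → ℝ) => p.1 - ⨆ i, p.2 i) ⁻¹' univ) ∂(expMeasure lam)
        = ∫⁻ _, 1 ∂(expMeasure lam) := by
      apply lintegral_congr_ae
      filter_upwards [expMeasure_ae_nonneg lam] with x hx
      rw [preimage_univ, Measure.map_apply measurable_prodMk_left MeasurableSet.univ,
        preimage_univ, Measure.pi_univ]
      simp [expChannel_univ hδ hx]
    rw [heq, lintegral_one, measure_univ]
    exact ENNReal.one_lt_top
  apply Measure.ext_of_Iic
  intro z
  rw [hbind (Iic z) measurableSet_Iic]
  have hcong : ∫⁻ x, (Measure.pi fun _ : Fin K => expChannel δ x).map (fun ys => (x, ys))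
      ((fun p : ℝ × (Fin K → ℝ) => p.1 - ⨆ i, p.2 i) ⁻¹' Iic z) ∂(expMeasure lam)
      = ∫⁻ x, (if 0 ≤ z then
          1 - (if z < x then ENNReal.ofReal (Real.exp (-((K:ℝ) * δ * z))) else 0)
        else 0) ∂(expMeasure lam) := by
    apply lintegral_congr_ae
    filter_upwards [expMeasure_ae_nonneg lam] with x hx
    exact inner_eval hδ hK z hx
  rw [hcong]
  rcases lt_or_ge z 0 with hz | hz
  · simp only [if_neg (not_le.mpr hz)]
    rw [lintegral_const, zero_mul, expMeasure_Iic hr, if_neg (not_le.mpr hz),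
      ENNReal.ofReal_zero]
  · simp only [if_pos hz]
    set c := ENNReal.ofReal (Real.exp (-((K:ℝ) * δ * z))) with hcdef
    rw [← lintegral_add_compl
      (fun x => 1 - (if z < x then c else 0)) (measurableSet_Iic : MeasurableSet (Iic z))]
    have h1 : ∫⁻ x in Iic z, (1 - (if z < x then c else 0)) ∂(expMeasure lam)
        = expMeasure lam (Iic z) := by
      rw [setLIntegral_congr_fun measurableSet_Iic
        (fun x (hx : x ≤ z) => by rw [if_neg (not_lt.mpr hx), tsub_zero]),
        setLIntegral_one]
    have h2 : ∫⁻ x in (Iic z)ᶜ, (1 - (if z < x then c else 0)) ∂(expMeasure lam)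
        = (1 - c) * expMeasure lam (Iic z)ᶜ := by
      rw [setLIntegral_congr_fun measurableSet_Iic.compl
        (fun x hx => by
          rw [if_pos (by simpa [not_le] using hx : z < x)]),
        setLIntegral_const]
    rw [h1, h2]
    set A := Real.exp (-(lam * z)) with hAdef
    have hA0 : 0 ≤ A := Real.exp_nonneg _
    have hA1 : A ≤ 1 := Real.exp_le_one_iff.mpr (by nlinarith)
    set B := Real.exp (-((K:ℝ) * δ * z)) with hBdef
    have hB0 : 0 ≤ B := Real.exp_nonneg _
    have hB1 : B ≤ 1 := Real.exp_le_one_iff.mpr (by nlinarith [mul_nonneg (mul_nonneg hKpos.le hδ.le) hz])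
    have hμIic : expMeasure lam (Iic z) = ENNReal.ofReal (1 - A) := by
      rw [expMeasure_Iic hlam, if_pos hz]
    have key : ∀ E : ℝ, 0 ≤ E → E ≤ 1 → 1 - ENNReal.ofReal (1 - E) = ENNReal.ofReal E := by
      intro E hE0 hE1
      have hsum : ENNReal.ofReal (1 - E) + ENNReal.ofReal E = 1 := by
        rw [← ENNReal.ofReal_add (by linarith) hE0]
        norm_num
      calc (1 : ℝ≥0∞) - ENNReal.ofReal (1 - E)
          = (ENNReal.ofReal (1 - E) + ENNReal.ofReal E) - ENNReal.ofReal (1 - E) := by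
            rw [hsum]
        _ = ENNReal.ofReal E := by rw [ENNReal.add_sub_cancel_left ENNReal.ofReal_ne_top]
    have hμcompl : expMeasure lam (Iic z)ᶜ = ENNReal.ofReal A := by
      rw [measure_compl measurableSet_Iic (measure_ne_top _ _), measure_univ, hμIic,
        key A hA0 hA1]
    have hc : (1 : ℝ≥0∞) - c = ENNReal.ofReal (1 - B) := by
      have h := key (1 - B) (by linarith) (by linarith)
      rwa [sub_sub_cancel, ← hcdef] at h
    rw [hμIic, hμcompl, hc, ← ENNReal.ofReal_mul (by linarith),
      ← ENNReal.ofReal_add (by linarith) (by nlinarith),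
      expMeasure_Iic hr z, if_pos hz]
    congr 1
    have hAB : B * A = Real.exp (-(r * z)) := by
      rw [hBdef, hAdef, ← Real.exp_add]
      congr 1
      rw [hrdef]
      ring
    nlinarith [hAB]
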